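/- For every real ℓ > 0 and every real s > 0, the family k ↦ 1 − exp(−(s+k)ℓ) indexed by k ∈ ℕ is multipliable, the family m ↦ (1/m)·(exp(s·m·ℓ) − exp((s−1)·m·ℓ))⁻¹ indexed by integers m ≥ 1 is summable, and −log ∏_{k=0}^∞ (1 − e^{−(s+k)ℓ}) = ∑_{m=1}^∞ (1/m) · 1/(e^{s m ℓ} − e^{(s−1) m ℓ}). -/

import Mathlib

open Real

set_option maxHeartbeats 1000000

/-- Single-geodesic building block of the Selberg zeta function: multipliability of the
factors, summability of the expanded logarithm, and the identity
`-log ∏_k (1 - e^{-(s+k)ℓ}) = ∑_{m ≥ 1} (1/m) / (e^{smℓ} - e^{(s-1)mℓ})`. -/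
theorem stmt0 (ℓ s : ℝ) (hℓ : 0 < ℓ) (hs : 0 < s) :
    Multipliable (fun k : ℕ => 1 - Real.exp (-(s + k) * ℓ)) ∧
    Summable (fun m : ℕ+ =>
      (1 / (m : ℝ)) * (Real.exp (s * m * ℓ) - Real.exp ((s - 1) * m * ℓ))⁻¹) ∧
    -Real.log (∏' k : ℕ, (1 - Real.exp (-(s + k) * ℓ))) =
      ∑' m : ℕ+, (1 / (m : ℝ)) * (Real.exp (s * m * ℓ) - Real.exp ((s - 1) * m * ℓ))⁻¹ := by
  set x : ℕ → ℝ := fun k => Real.exp (-(s + k) * ℓ) with hx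
  have hx0 : ∀ k, 0 < x k := fun k => Real.exp_pos _
  have hx1 : ∀ k, x k < 1 := by
    intro k
    rw [hx]
    simp only [← Real.exp_zero]
    apply Real.exp_lt_exp.2
    have : (0:ℝ) ≤ k := Nat.cast_nonneg k
    nlinarith
  have hxle : ∀ k, x k ≤ x 0 := by
    intro k
    apply Real.exp_le_exp.2
    have : (0:ℝ) ≤ k := Nat.cast_nonneg k
    simp only [Nat.cast_zero]
    nlinarith
  have hxgeom : ∀ k, x k = Real.exp (-s * ℓ) * Real.exp (-ℓ) ^ k := by
    intro k
    rw [hx, ← Real.exp_nat_mul, ← Real.exp_add]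
    ring_nf
  have hxsum : Summable x := by
    refine Summable.congr ?_ (fun k => (hxgeom k).symm)
    exact (summable_geometric_of_lt_one (Real.exp_pos _).le
      (Real.exp_lt_one_iff.2 (by linarith))).mul_left _
  have hneglog : ∀ k, -Real.log (1 - x k) ≤ x k / (1 - x 0) := by
    intro k
    have h1 : (0:ℝ) < 1 - x 0 := by linarith [hx1 0]
    have h2 : (0:ℝ) < 1 - x k := by linarith [hx1 k]
    have h3 : Real.log (1 - x k)⁻¹ ≤ (1 - x k)⁻¹ - 1 :=
      Real.log_le_sub_one_of_pos (by positivity)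
    rw [Real.log_inv] at h3
    have h4 : (1 - x k)⁻¹ - 1 = x k / (1 - x k) := by field_simp; ring
    have h5 : x k / (1 - x k) ≤ x k / (1 - x 0) := by
      apply div_le_div_of_nonneg_left (hx0 k).le h1
      linarith [hxle k]
    linarith
  have hnl0 : ∀ k, 0 ≤ -Real.log (1 - x k) := by
    intro k
    have : Real.log (1 - x k) ≤ 0 :=
      Real.log_nonpos (by linarith [hx1 k]) (by linarith [hx0 k])
    linarith
  have hlogsum : Summable fun k => Real.log (1 - x k) := by
    rw [← summable_neg_iff]
    exact Summable.of_nonneg_of_le hnl0 hneglog (hxsum.div_const _)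
  have hmult : Multipliable (fun k : ℕ => 1 - x k) :=
    Real.multipliable_of_summable_log
      (fun k => by show (0:ℝ) < 1 - x k; linarith [hx1 k]) hlogsum
  have hprod : ∏' k : ℕ, (1 - x k) = Real.exp (∑' k, Real.log (1 - x k)) :=
    (Real.rexp_tsum_eq_tprod
      (fun k => by show (0:ℝ) < 1 - x k; linarith [hx1 k]) hlogsum).symm
  have hlogprod : -Real.log (∏' k : ℕ, (1 - x k)) = ∑' k, -Real.log (1 - x k) := by
    rw [hprod, Real.log_exp, tsum_neg]
  set F : ℕ × ℕ → ℝ := fun p => x p.1 ^ (p.2 + 1) / (p.2 + 1) with hF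
  have hF0 : ∀ p, 0 ≤ F p := fun p => by
    have := hx0 p.1
    positivity
  have hFk : ∀ k, HasSum (fun m => F (k, m)) (-Real.log (1 - x k)) := fun k =>
    hasSum_pow_div_log_of_abs_lt_one (by rw [abs_of_pos (hx0 k)]; exact hx1 k)
  have hFsum : Summable F := by
    rw [summable_prod_of_nonneg hF0]
    refine ⟨fun k => (hFk k).summable, ?_⟩
    apply Summable.congr _ (fun k => ((hFk k).tsum_eq).symm)
    exact (summable_neg_iff.2 hlogsum)
  have hFswap : Summable (fun p : ℕ × ℕ => F p.swap) := hFsum.prod_symm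
  have hFcol : ∀ n, Summable (fun k => F (k, n)) := by
    intro n
    exact ((summable_prod_of_nonneg (fun p => hF0 p.swap)).1 hFswap).1 n
  have hFcolsum : Summable (fun n => ∑' k, F (k, n)) :=
    ((summable_prod_of_nonneg (fun p => hF0 p.swap)).1 hFswap).2
  have key : ∀ n : ℕ,
      (1 / ((n:ℝ) + 1)) * (Real.exp (s * ((n:ℝ)+1) * ℓ) - Real.exp ((s - 1) * ((n:ℝ)+1) * ℓ))⁻¹
        = ∑' k : ℕ, F (k, n) := by
    intro n
    have hM : (0:ℝ) < (n:ℝ) + 1 := by positivity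
    have hq : Real.exp (-(((n:ℝ)+1) * ℓ)) < 1 := Real.exp_lt_one_iff.2 (by nlinarith)
    have hgeo : HasSum (fun k : ℕ => Real.exp (-(s * ((n:ℝ)+1) * ℓ)) * Real.exp (-(((n:ℝ)+1) * ℓ)) ^ k)
        (Real.exp (-(s * ((n:ℝ)+1) * ℓ)) * (1 - Real.exp (-(((n:ℝ)+1) * ℓ)))⁻¹) :=
      (hasSum_geometric_of_lt_one (Real.exp_pos _).le hq).mul_left _
    have hterm : ∀ k : ℕ, F (k, n) =
        (1 / ((n:ℝ)+1)) * (Real.exp (-(s * ((n:ℝ)+1) * ℓ)) * Real.exp (-(((n:ℝ)+1) * ℓ)) ^ k) := by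
      intro k
      rw [hF]
      simp only [hx, ← Real.exp_nat_mul, ← Real.exp_add]
      rw [div_eq_mul_inv, mul_comm, one_div]
      congr 1
      push_cast
      ring_nf
    rw [tsum_congr hterm, tsum_mul_left, hgeo.tsum_eq]
    congr 1
    have hbase : Real.exp (s * ((n:ℝ)+1) * ℓ) - Real.exp ((s - 1) * ((n:ℝ)+1) * ℓ)
        = (Real.exp (-(s * ((n:ℝ)+1) * ℓ)) * (1 - Real.exp (-(((n:ℝ)+1) * ℓ)))⁻¹)⁻¹ := by
      rw [mul_inv, inv_inv, ← Real.exp_neg, neg_neg, mul_sub, mul_one, ← Real.exp_add]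
      congr 2
      ring
    rw [hbase, inv_inv]
  -- transfer to ℕ+
  set g : ℕ+ → ℝ := fun m =>
    (1 / (m : ℝ)) * (Real.exp (s * m * ℓ) - Real.exp ((s - 1) * m * ℓ))⁻¹ with hg
  have hcomp : ∀ n : ℕ, g (Equiv.pnatEquivNat.symm n) = ∑' k : ℕ, F (k, n) := by
    intro n
    have hc : ((Equiv.pnatEquivNat.symm n : ℕ+) : ℝ) = (n : ℝ) + 1 := by
      simp [Equiv.pnatEquivNat, Nat.succPNat]
    rw [hg]
    simp only [hc]
    exact key n
  have hgsum : Summable g := by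
    rw [← Equiv.pnatEquivNat.symm.summable_iff]
    exact hFcolsum.congr (fun n => (hcomp n).symm)
  refine ⟨hmult, hgsum, ?_⟩
  rw [hlogprod, ← Equiv.pnatEquivNat.symm.tsum_eq g]
  rw [tsum_congr hcomp]
  rw [tsum_congr (fun k => (hFk k).tsum_eq.symm)]
  exact (Summable.tsum_comm' (f := fun k m => F (k, m)) hFsum (fun k => (hFk k).summable) hFcol).symm
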